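/- Let f : S¹ → S¹ be a continuous open map and M ⊆ S¹ a closed set with f(M) ⊆ M. Let K = {x ∈ M : every neighborhood of x meets M in an uncountable set} be the set of condensation points of M. Then f(K) ⊆ K. -/

import Mathlib

open Set Topology Filter

/-- The circle. -/
abbrev S1 := AddCircle (1 : ℝ)

/-- Apply a word `l = [i₁, …, i_k]` of generators: `f i₁ ∘ ⋯ ∘ f i_k`. -/
def applyWord {X : Type*} {n : ℕ} (f : Fin n → X → X) (l : List (Fin n)) (x : X) : X :=
  l.foldr (fun i y => f i y) x

/-- The orbit of `x` under the semigroup `IFS(f₁,…,fₙ)` (nonempty words). -/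
def orbitIFS {X : Type*} {n : ℕ} (f : Fin n → X → X) (x : X) : Set X :=
  {y | ∃ l : List (Fin n), l ≠ [] ∧ y = applyWord f l x}

/-- `M` is a minimal set for the IFS generated by `f₁,…,fₙ`. -/
def IsMinimalIFS {X : Type*} [TopologicalSpace X] {n : ℕ} (f : Fin n → X → X)
    (M : Set X) : Prop :=
  M.Nonempty ∧ IsClosed M ∧ (∀ i, f i '' M ⊆ M) ∧
    ∀ x ∈ M, closure (orbitIFS f x) = M

/-- A Cantor set: nonempty, compact, perfect and totally disconnected. -/
def IsCantorSet {X : Type*} [TopologicalSpace X] (K : Set X) : Prop :=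
  K.Nonempty ∧ IsCompact K ∧ Perfect K ∧ IsTotallyDisconnected K

/-- `X` is (homeomorphic to) the circle or a (nondegenerate) closed interval. -/
def IsCircleOrInterval (X : Type*) [TopologicalSpace X] : Prop :=
  Nonempty (X ≃ₜ S1) ∨ ∃ a b : ℝ, a < b ∧ Nonempty (X ≃ₜ Set.Icc a b)

/-- The canonical decomposition `M = 𝓘 ∪ K ∪ N` of a closed set:
`𝓘` is the interior (union of components of the interior), `K` is the maximal
Cantor set contained in `M \ 𝓘` (possibly empty), and `N` is the countable remainder. -/
def IsCanonicalDecomp {X : Type*} [TopologicalSpace X] (M I K N : Set X) : Prop :=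
  I = interior M ∧
  (IsCantorSet K ∨ K = ∅) ∧
  K ⊆ M \ I ∧
  (∀ K₁ : Set X, IsCantorSet K₁ → K ⊆ K₁ → K₁ ⊆ M \ I → K₁ = K) ∧
  N = M \ (I ∪ K) ∧
  N.Countable

/-- A symmetric Cantorval: a nonempty compact set which is the closure of its interior,
and such that both endpoints of every nontrivial connected component are accumulation
points of one-point connected components. -/
def IsSymmetricCantorval {X : Type*} [TopologicalSpace X] (M : Set X) : Prop :=
  M.Nonempty ∧ IsCompact M ∧ M = closure (interior M) ∧
  ∀ x ∈ M, ¬ (connectedComponentIn M x).Subsingleton →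
    ∀ z ∈ frontier (connectedComponentIn M x),
      AccPt z (𝓟 {y | y ∈ M ∧ connectedComponentIn M y = {y}})


lemma half_ne (b : ℝ) : ((b + 1/2 : ℝ) : S1) ≠ (b : S1) := by
  intro h
  have h2 : ((1/2 : ℝ) : S1) = 0 := by
    rw [AddCircle.coe_add] at h
    simpa using h
  rw [AddCircle.coe_eq_zero_iff] at h2
  obtain ⟨n, hn⟩ := h2
  have : (n : ℝ) = 1/2 := by simpa using hn
  have h1 : ((2*n : ℤ) : ℝ) = 1 := by push_cast; linarith
  have : (2*n : ℤ) = 1 := by exact_mod_cast h1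
  omega

lemma isolated_in_fiber (f : S1 → S1) (hcont : Continuous f) (hopen : IsOpenMap f)
    (q : S1) : ∃ U ∈ 𝓝 q, ∀ y ∈ U, f y = f q → y = q := by
  by_contra hcon
  push_neg at hcon
  obtain ⟨b, rfl⟩ : ∃ b : ℝ, (b : S1) = q := Quotient.exists_rep q
  obtain ⟨c0, hc0⟩ : ∃ c0 : ℝ, (c0 : S1) = f b := Quotient.exists_rep _
  set e₁ := AddCircle.openPartialHomeomorphCoe (1:ℝ) (b - 1/2) with he₁
  set e₂ := AddCircle.openPartialHomeomorphCoe (1:ℝ) (c0 + 1/2) with he₂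
  have he₁src : e₁.source = Ioo (b - 1/2) (b - 1/2 + 1) := rfl
  have he₂tgt : e₂.target = {((c0 + 1/2 : ℝ) : S1)}ᶜ := rfl
  have he₁app : ∀ x : ℝ, e₁ x = (x : S1) := fun _ => rfl
  have hb₁ : b ∈ e₁.source := by rw [he₁src]; constructor <;> [linarith; linarith]
  have hfq₂ : f (b : S1) ∈ e₂.target := by
    rw [he₂tgt]
    simp only [mem_compl_iff, mem_singleton_iff]
    intro h
    exact half_ne c0 (h.symm.trans hc0.symm)
  set F : ℝ → S1 := fun x => f ((x : ℝ) : S1) with hF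
  have hFcont : ContinuousOn F e₁.source := hcont.comp_continuousOn e₁.continuousOn
  set W : Set ℝ := e₁.source ∩ F ⁻¹' e₂.target with hW
  have hWopen : IsOpen W := hFcont.isOpen_inter_preimage e₁.open_source e₂.open_target
  have hbW : b ∈ W := ⟨hb₁, hfq₂⟩
  set g : ℝ → ℝ := fun x => e₂.symm (F x) with hg
  set c : ℝ := e₂.symm (f (b : S1)) with hc
  have hgb : g b = c := rfl
  -- continuity of g on W
  have hgcont : ContinuousOn g W :=
    e₂.continuousOn_symm.comp (hFcont.mono inter_subset_left) (fun x hx => hx.2)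
  -- openness of g images
  have hgopen : ∀ V : Set ℝ, IsOpen V → V ⊆ W → IsOpen (g '' V) := by
    intro V hV hVW
    have h1 : IsOpen ((↑) '' V : Set S1) := by
      have := e₁.isOpen_image_of_subset_source hV (hVW.trans inter_subset_left)
      simpa [he₁app] using this
    have h2 : IsOpen (f '' ((↑) '' V : Set S1)) := hopen _ h1
    have h3 : f '' ((↑) '' V : Set S1) ⊆ e₂.target := by
      rintro _ ⟨_, ⟨x, hxV, rfl⟩, rfl⟩
      exact (hVW hxV).2
    have h4 := e₂.symm.isOpen_image_of_subset_source h2 (by rw [e₂.symm_source]; exact h3)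
    have : g '' V = e₂.symm '' (f '' ((↑) '' V : Set S1)) := by
      rw [image_image, image_image]
    rw [this]; exact h4
  -- find a nearby point t ≠ b with g t = c
  obtain ⟨ε, hε, hball⟩ := Metric.isOpen_iff.mp hWopen b hbW
  have hUopen : IsOpen ((↑) '' (W ∩ Metric.ball b ε) : Set S1) := by
    have h := e₁.isOpen_image_of_subset_source (s := W ∩ Metric.ball b ε)
      (hWopen.inter Metric.isOpen_ball) ((inter_subset_left).trans inter_subset_left)
    simpa [he₁app] using h
  have hqU : ((b : ℝ) : S1) ∈ ((↑) '' (W ∩ Metric.ball b ε) : Set S1) :=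
    ⟨b, ⟨hbW, Metric.mem_ball_self hε⟩, rfl⟩
  obtain ⟨y, hyU, hyf, hyq⟩ := hcon _ (hUopen.mem_nhds hqU)
  obtain ⟨t, ⟨htW, htball⟩, rfl⟩ := hyU
  have htb : t ≠ b := fun h => hyq (by rw [h])
  have hgt : g t = c := by rw [hg, hc, hF]; simp [hyf]
  -- interval setup
  set l := min b t with hl
  set r := max b t with hr
  have hlr : l < r := min_lt_max.mpr (Ne.symm htb)
  have hIcc : Icc l r ⊆ W := by
    refine subset_trans ?_ hball
    rw [Real.ball_eq_Ioo]
    apply Icc_subset_Ioo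
    · rw [Real.ball_eq_Ioo] at htball
      simp only [hl, lt_min_iff]
      have hbb : b - ε < b := by linarith
      exact ⟨hbb, (htball.1 : _)⟩
    · rw [Real.ball_eq_Ioo] at htball
      simp only [hr, max_lt_iff]
      have hbb : b < b + ε := by linarith
      exact ⟨hbb, htball.2⟩
  have hgl : g l = c := by rcases min_cases b t with ⟨h, _⟩ | ⟨h, _⟩ <;> rw [hl, h] <;> assumption
  have hgr : g r = c := by rcases max_cases b t with ⟨h, _⟩ | ⟨h, _⟩ <;> rw [hr, h] <;> assumption
  have hgIcc : ContinuousOn g (Icc l r) := hgcont.mono hIcc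
  obtain ⟨ξ, hξI, hmax⟩ := isCompact_Icc.exists_isMaxOn (nonempty_Icc.mpr hlr.le) hgIcc
  obtain ⟨η, hηI, hmin⟩ := isCompact_Icc.exists_isMinOn (nonempty_Icc.mpr hlr.le) hgIcc
  have hOopen : IsOpen (g '' Ioo l r) := hgopen _ isOpen_Ioo (Ioo_subset_Icc_self.trans hIcc)
  by_cases hξc : c < g ξ
  · have hξIoo : ξ ∈ Ioo l r := by
      rcases hξI with ⟨h1, h2⟩
      constructor
      · rcases h1.lt_or_eq with h | h
        · exact h
        · exfalso; rw [← h, hgl] at hξc; exact lt_irrefl _ hξc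
      · rcases h2.lt_or_eq with h | h
        · exact h
        · exfalso; rw [h, hgr] at hξc; exact lt_irrefl _ hξc
    have hmem : g ξ ∈ g '' Ioo l r := ⟨ξ, hξIoo, rfl⟩
    have hsub : g '' Ioo l r ⊆ Iic (g ξ) := by
      rintro _ ⟨z, hz, rfl⟩; exact hmax (Ioo_subset_Icc_self hz)
    have := (hOopen.subset_interior_iff.mpr hsub) hmem
    rw [interior_Iic] at this
    exact lt_irrefl _ (mem_Iio.mp this)
  · by_cases hηc : g η < c
    · have hηIoo : η ∈ Ioo l r := by
        rcases hηI with ⟨h1, h2⟩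
        constructor
        · rcases h1.lt_or_eq with h | h
          · exact h
          · exfalso; rw [← h, hgl] at hηc; exact lt_irrefl _ hηc
        · rcases h2.lt_or_eq with h | h
          · exact h
          · exfalso; rw [h, hgr] at hηc; exact lt_irrefl _ hηc
      have hmem : g η ∈ g '' Ioo l r := ⟨η, hηIoo, rfl⟩
      have hsub : g '' Ioo l r ⊆ Ici (g η) := by
        rintro _ ⟨z, hz, rfl⟩; exact hmin (Ioo_subset_Icc_self hz)
      have := (hOopen.subset_interior_iff.mpr hsub) hmem
      rw [interior_Ici] at this
      exact lt_irrefl _ (mem_Ioi.mp this)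
    · push_neg at hξc hηc
      have hconst : ∀ z ∈ Icc l r, g z = c :=
        fun z hz => le_antisymm ((hmax hz).trans hξc) (hηc.trans (hmin hz))
      have hmid : (l + r) / 2 ∈ Ioo l r := ⟨by linarith, by linarith⟩
      have hmem : c ∈ g '' Ioo l r := ⟨_, hmid, hconst _ (Ioo_subset_Icc_self hmid)⟩
      have hsub : g '' Ioo l r ⊆ Iic c := by
        rintro _ ⟨z, hz, rfl⟩; exact le_of_eq (hconst _ (Ioo_subset_Icc_self hz))
      have := (hOopen.subset_interior_iff.mpr hsub) hmem
      rw [interior_Iic] at this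
      exact lt_irrefl _ (mem_Iio.mp this)

lemma fiber_finite (f : S1 → S1) (hcont : Continuous f) (hopen : IsOpenMap f)
    (p : S1) : (f ⁻¹' {p}).Finite := by
  have hd : DiscreteTopology ↥(f ⁻¹' {p}) := by
    rw [discreteTopology_subtype_iff]
    intro x hx
    rw [inf_principal_eq_bot]
    obtain ⟨U, hU, hiso⟩ := isolated_in_fiber f hcont hopen x
    have hsub : U ∩ {x}ᶜ ⊆ (f ⁻¹' {p})ᶜ := by
      rintro y ⟨hyU, hyx⟩ hyF
      exact hyx (hiso y hyU ((show f y = p from hyF).trans (show f x = p from hx).symm))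
    exact mem_of_superset
      (inter_mem (mem_nhdsWithin_of_mem_nhds hU) self_mem_nhdsWithin) hsub
  exact ((isClosed_singleton.preimage hcont).isCompact).finite (isDiscrete_iff_discreteTopology.mpr hd)

theorem stmt12 (f : S1 → S1) (hcont : Continuous f) (hopen : IsOpenMap f)
    (M : Set S1) (hM : IsClosed M) (hinv : f '' M ⊆ M) :
    f '' {x : S1 | x ∈ M ∧ ∀ U ∈ 𝓝 x, ¬ (U ∩ M).Countable}
      ⊆ {x : S1 | x ∈ M ∧ ∀ U ∈ 𝓝 x, ¬ (U ∩ M).Countable} := by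
  rintro _ ⟨x, ⟨hxM, hK⟩, rfl⟩
  refine ⟨hinv ⟨x, hxM, rfl⟩, ?_⟩
  intro U hU hc
  apply hK (f ⁻¹' U) (hcont.continuousAt.preimage_mem_nhds hU)
  have hsub : f ⁻¹' U ∩ M ⊆ ⋃ p ∈ U ∩ M, f ⁻¹' {p} := by
    rintro y ⟨hyU, hyM⟩
    exact mem_biUnion ⟨hyU, hinv ⟨y, hyM, rfl⟩⟩ rfl
  exact (hc.biUnion fun p _ => (fiber_finite f hcont hopen p).countable).mono hsub
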